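/- Let 0 < s ≤ 1 and h ∈ CV_hpl(s) with inverse h^{-1}(w) = w + ∑_{n≥2} B_n w^n near 0, and λ ∈ ℝ. Then |B₃ − λB₂²| ≤ (s²/4)(λ − (3s−1)/(3s)) if λ ≥ (3s+1)/(3s); ≤ s/6 if (s−1)/s ≤ λ ≤ (3s+1)/(3s); and ≤ (s²/4)((3s−1)/(3s) − λ) if λ ≤ (s−1)/s. -/

import Mathlib

open Metric FormalMultilinearSeries NNReal

private lemma aux_radius (c : ℕ → ℂ)
    (h : ∀ r : ℝ≥0, (r:ℝ) < 1 → Summable fun n => ‖c n‖ * (r:ℝ)^n) :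
    1 ≤ (ofScalars ℂ c).radius := by
  apply ENNReal.le_of_forall_nnreal_lt
  intro r hr
  apply le_radius_of_summable_norm
  have h2 := h r (by exact_mod_cast hr)
  have : (fun n => ‖ofScalars ℂ c n‖ * (r:ℝ)^n) = fun n => ‖c n‖ * (r:ℝ)^n := by
    funext n; rw [ofScalars_norm]
  rw [this]; exact h2

set_option maxHeartbeats 1000000 in
private lemma schwarz_two_coeff (ω : ℂ → ℂ) (w : ℕ → ℂ) (hw0 : w 0 = 0)
    (hsum : ∀ z ∈ Metric.ball (0 : ℂ) 1, Summable fun n => w n * z ^ n)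
    (hrep : ∀ z ∈ Metric.ball (0 : ℂ) 1, ω z = ∑' n, w n * z ^ n)
    (hb : ∀ z ∈ Metric.ball (0 : ℂ) 1, ‖ω z‖ < 1) :
    ‖w 1‖ ≤ 1 ∧ ‖w 2‖ ≤ 1 - ‖w 1‖ ^ 2 := by
  have hball : Metric.eball (0:ℂ) 1 = Metric.ball (0:ℂ) 1 := by
    rw [show (1:ENNReal) = ((1:ℝ≥0):ENNReal) by norm_num, Metric.emetric_ball_nnreal]
    norm_num
  have hnorm : ∀ r : ℝ≥0, (r:ℝ) < 1 → Summable fun n => ‖w n‖ * (r:ℝ)^n := by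
    intro r hr
    have hz : ((r:ℝ):ℂ) ∈ Metric.ball (0:ℂ) 1 := by
      simp [Complex.norm_real, abs_of_nonneg r.2, hr]
    have := (hsum _ hz).norm
    simpa [norm_mul, Complex.norm_real, abs_of_nonneg r.2] using this
  have hnorm' : ∀ r : ℝ≥0, (r:ℝ) < 1 → Summable fun n => ‖w (n+1)‖ * (r:ℝ)^n := by
    intro r hr
    set t : ℝ := (1 + (r:ℝ))/2 with ht
    have h0r : (0:ℝ) ≤ r := r.2
    have ht0 : 0 < t := by positivity
    have ht1 : t < 1 := by simp only [ht]; linarith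
    have hrt : (r:ℝ) ≤ t := by simp only [ht]; linarith
    have h1 : Summable fun n => ‖w n‖ * t^n := by
      have := hnorm ⟨t, ht0.le⟩ (by simpa)
      exact this
    have h2 : Summable fun n => ‖w (n+1)‖ * t^(n+1) := by
      exact (_root_.summable_nat_add_iff (f := fun n => ‖w n‖ * t^n) 1).mpr h1
    refine Summable.of_nonneg_of_le (fun n => by positivity) (fun n => ?_) (h2.mul_left t⁻¹)
    rw [pow_succ]
    have hpow : (r:ℝ)^n ≤ t^n := pow_le_pow_left₀ h0r hrt n
    calc ‖w (n+1)‖ * (r:ℝ)^n ≤ ‖w (n+1)‖ * t^n :=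
          mul_le_mul_of_nonneg_left hpow (norm_nonneg _)
      _ = t⁻¹ * (‖w (n+1)‖ * (t^n * t)) := by field_simp
  set p := ofScalars ℂ w with hp
  set q := ofScalars ℂ (fun n => w (n+1)) with hq
  have hpr : 1 ≤ p.radius := aux_radius w hnorm
  have hqr : 1 ≤ q.radius := aux_radius _ hnorm'
  have hpb : HasFPowerSeriesOnBall p.sum p 0 1 :=
    (p.hasFPowerSeriesOnBall (lt_of_lt_of_le one_pos hpr)).mono one_pos hpr
  have hqb : HasFPowerSeriesOnBall q.sum q 0 1 :=
    (q.hasFPowerSeriesOnBall (lt_of_lt_of_le one_pos hqr)).mono one_pos hqr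
  have hpsum : ∀ z : ℂ, p.sum z = ∑' n, w n * z ^ n := by
    intro z; rw [show p.sum z = ofScalarsSum w z from rfl]; simpa [smul_eq_mul] using ofScalars_sum_eq w z
  have hqsum : ∀ z : ℂ, q.sum z = ∑' n, w (n+1) * z ^ n := by
    intro z; rw [show q.sum z = ofScalarsSum (fun n => w (n+1)) z from rfl]; simpa [smul_eq_mul] using ofScalars_sum_eq (fun n => w (n+1)) z
  have hωb : HasFPowerSeriesOnBall ω p 0 1 := by
    apply hpb.congr
    intro z hz
    rw [hball] at hz
    rw [hpsum z, ← hrep z hz]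
  have hω0 : ω 0 = 0 := by
    rw [hrep 0 (by simp), tsum_eq_single 0 (by intro n hn; simp [zero_pow hn]), hw0]
    simp
  have hωat : HasFPowerSeriesAt ω p 0 := ⟨1, hωb⟩
  have hqat : HasFPowerSeriesAt q.sum q 0 := ⟨1, hqb⟩
  have hg0 : q.sum 0 = w 1 := by
    rw [hqsum, tsum_eq_single 0 (by intro n hn; simp [zero_pow hn])]
    simp
  have hderivω : deriv ω 0 = w 1 := by
    rw [hωat.deriv, hp]
    simp [ofScalars]
  have hgderivAt : HasDerivAt q.sum (w 2) 0 := by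
    have := hqat.hasDerivAt
    simpa [hq, ofScalars] using this
  have hdiffω : DifferentiableOn ℂ ω (Metric.ball 0 1) := by
    rw [← hball]; exact hωb.differentiableOn
  have hdiffg : DifferentiableOn ℂ q.sum (Metric.ball 0 1) := by
    rw [← hball]; exact hqb.differentiableOn
  have hdsl : ∀ z ∈ Metric.ball (0:ℂ) 1, dslope ω 0 z = q.sum z := by
    intro z hz
    rcases eq_or_ne z 0 with rfl | hz0
    · rw [dslope_same, hderivω, hg0]
    · rw [dslope_of_ne _ hz0, slope_def_field, hω0, sub_zero, sub_zero,
        hrep z hz, hqsum, (hsum z hz).tsum_eq_zero_add, hw0, zero_mul, zero_add]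
      have : (fun n => w (n+1) * z^(n+1)) = fun n => (w (n+1) * z^n) * z := by
        funext n; rw [pow_succ]; ring
      rw [this, _root_.tsum_mul_right, mul_div_cancel_right₀ _ hz0]
  have hmapsω : Set.MapsTo ω (Metric.ball (0:ℂ) 1) (Metric.ball (ω 0) 1) := by
    intro ζ hζ
    rw [hω0]
    simpa [Metric.mem_ball, dist_zero_right] using hb ζ hζ
  have hbound : ∀ z ∈ Metric.ball (0:ℂ) 1, ‖q.sum z‖ ≤ 1 := by
    intro z hz
    rw [← hdsl z hz]
    simpa using Complex.norm_dslope_le_div_of_mapsTo_ball hdiffω (hmapsω.mono_right Metric.ball_subset_closedBall) hz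
  have hw1 : ‖w 1‖ ≤ 1 := by
    have := hbound 0 (by simp)
    rwa [hg0] at this
  refine ⟨hw1, ?_⟩
  by_cases hex : ∃ z ∈ Metric.ball (0:ℂ) 1, ‖q.sum z‖ = 1
  · -- maximum modulus: q.sum is constant, so w 2 = 0
    obtain ⟨z₀, hz₀, hmax⟩ := hex
    have hm : IsMaxOn (norm ∘ q.sum) (Metric.ball (0:ℂ) 1) z₀ := by
      intro x hx
      simp only [Function.comp, Set.mem_setOf_eq, hmax]
      exact hbound x hx
    have heq : Set.EqOn q.sum (Function.const ℂ (q.sum z₀)) (Metric.ball (0:ℂ) 1) :=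
      Complex.eqOn_of_isPreconnected_of_isMaxOn_norm (convex_ball _ _).isPreconnected
        isOpen_ball hdiffg hz₀ hm
    have hd0 : deriv q.sum 0 = 0 := by
      have hev : q.sum =ᶠ[nhds 0] Function.const ℂ (q.sum z₀) :=
        Filter.eventuallyEq_of_mem (isOpen_ball.mem_nhds (by simp)) heq
      rw [hev.deriv_eq]
      exact deriv_const _ _
    have hw2 : w 2 = 0 := by rw [← hgderivAt.deriv, hd0]
    rw [hw2, norm_zero]
    nlinarith [norm_nonneg (w 1)]
  · push_neg at hex
    have hlt : ∀ z ∈ Metric.ball (0:ℂ) 1, ‖q.sum z‖ < 1 :=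
      fun z hz => lt_of_le_of_ne (hbound z hz) (hex z hz)
    set a := w 1 with hadef
    have ha : ‖a‖ < 1 := by
      have := hlt 0 (by simp); rwa [hg0] at this
    have key : ∀ u v : ℂ, Complex.normSq (1 - (starRingEnd ℂ) u * v) - Complex.normSq (v - u)
        = (1 - Complex.normSq u) * (1 - Complex.normSq v) := by
      intro u v
      simp only [Complex.normSq_apply, Complex.sub_re, Complex.sub_im, Complex.one_re,
        Complex.one_im, Complex.mul_re, Complex.mul_im, Complex.conj_re, Complex.conj_im]
      ring
    have hnsq : ∀ ζ : ℂ, ‖ζ‖ < 1 → ‖ζ - a‖ < ‖1 - (starRingEnd ℂ) a * ζ‖ := by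
      intro ζ hζ
      have h1 : Complex.normSq a < 1 := by
        rw [← Complex.sq_norm]; nlinarith [norm_nonneg a]
      have h2 : Complex.normSq ζ < 1 := by
        rw [← Complex.sq_norm]; nlinarith [norm_nonneg ζ]
      have hk := key a ζ
      apply lt_of_pow_lt_pow_left₀ 2 (norm_nonneg _)
      rw [Complex.sq_norm, Complex.sq_norm]
      nlinarith [Complex.normSq_nonneg (ζ - a)]
    have hden : ∀ ζ : ℂ, ‖ζ‖ < 1 → (1 - (starRingEnd ℂ) a * ζ) ≠ 0 := by
      intro ζ hζ h0
      have := hnsq ζ hζ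
      rw [h0, norm_zero] at this
      exact absurd this (not_lt.mpr (norm_nonneg _))
    set G := fun z => (q.sum z - a) / (1 - (starRingEnd ℂ) a * q.sum z) with hGdef
    have hG0 : G 0 = 0 := by
      show (q.sum 0 - a) / (1 - (starRingEnd ℂ) a * q.sum 0) = 0
      rw [hg0, sub_self, zero_div]
    have hdiffG : DifferentiableOn ℂ G (Metric.ball (0:ℂ) 1) := by
      intro z hz
      have hgz : DifferentiableAt ℂ q.sum z :=
        hdiffg.differentiableAt (isOpen_ball.mem_nhds hz)
      apply DifferentiableAt.differentiableWithinAt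
      exact (hgz.sub_const a).div
        ((differentiableAt_const _).sub ((differentiableAt_const _).mul hgz))
        (hden _ (hlt z hz))
    have hmapsG : Set.MapsTo G (Metric.ball (0:ℂ) 1) (Metric.ball (G 0) 1) := by
      intro z hz
      rw [hG0, Metric.mem_ball, dist_zero_right]
      have hζ := hlt z hz
      show ‖(q.sum z - a) / (1 - (starRingEnd ℂ) a * q.sum z)‖ < 1
      rw [norm_div, div_lt_one ((norm_nonneg (q.sum z - a)).trans_lt (hnsq _ hζ))]
      exact hnsq _ hζ
    have hden0 : (1 - (starRingEnd ℂ) a * q.sum 0) ≠ 0 := hden _ (hlt 0 (by simp))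
    have hGderiv : HasDerivAt G (w 2 / (1 - (starRingEnd ℂ) a * a)) 0 := by
      have h1 : HasDerivAt (fun z => q.sum z - a) (w 2) 0 := hgderivAt.sub_const a
      have h2 : HasDerivAt (fun z => 1 - (starRingEnd ℂ) a * q.sum z)
          (-((starRingEnd ℂ) a * w 2)) 0 := by
        simpa using (hgderivAt.const_mul ((starRingEnd ℂ) a)).const_sub 1
      have h3 := h1.div h2 hden0
      have hne : (1 - (starRingEnd ℂ) a * a) ≠ 0 := by rwa [hg0] at hden0
      refine h3.congr_deriv ?_
      rw [hg0, sub_self, zero_mul, sub_zero, pow_two, mul_div_mul_right _ _ hne]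
    have hGd : ‖deriv G 0‖ ≤ 1 := by
      simpa using Complex.norm_deriv_le_div_of_mapsTo_ball hdiffG (hmapsG.mono_right Metric.ball_subset_closedBall) (by norm_num : (0:ℝ) < 1)
    rw [hGderiv.deriv] at hGd
    have haa : (1 - (starRingEnd ℂ) a * a) = ((1 - Complex.normSq a : ℝ) : ℂ) := by
      push_cast
      rw [mul_comm, Complex.mul_conj]
    have h1 : Complex.normSq a < 1 := by
      rw [← Complex.sq_norm]; nlinarith [norm_nonneg a]
    rw [haa, norm_div, Complex.norm_real, Real.norm_eq_abs,
      abs_of_pos (by linarith), div_le_one (by linarith)] at hGd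
    have : Complex.normSq a = ‖a‖^2 := by
      rw [← Complex.sq_norm]
    rw [this] at hGd
    linarith


/-- Fekete–Szegő inequalities for inverse coefficients in `CV_hpl(s)`,
stated (as sanctioned by the context) via a Schwarz function `ω` with coefficients `w`,
`d₂ = s w₁/2`, `d₃ = (s/6)(w₂ + ((3s+1)/2)w₁²)`, `B₂ = -d₂`, `B₃ = 2d₂² - d₃`. -/
theorem stmt_16 (s lam : ℝ) (hs0 : 0 < s) (hs1 : s ≤ 1)
    (ω : ℂ → ℂ) (w d B : ℕ → ℂ) (hw0 : w 0 = 0)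
    (hsum : ∀ z ∈ Metric.ball (0 : ℂ) 1, Summable fun n => w n * z ^ n)
    (hrep : ∀ z ∈ Metric.ball (0 : ℂ) 1, ω z = ∑' n, w n * z ^ n)
    (hb : ∀ z ∈ Metric.ball (0 : ℂ) 1, ‖ω z‖ < 1)
    (hd2 : d 2 = (s : ℂ) * w 1 / 2)
    (hd3 : d 3 = ((s : ℂ) / 6) * (w 2 + ((3 * (s : ℂ) + 1) / 2) * w 1 ^ 2))
    (hB2 : B 2 = -d 2) (hB3 : B 3 = 2 * d 2 ^ 2 - d 3) :
    ((3 * s + 1) / (3 * s) ≤ lam →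
      ‖B 3 - (lam : ℂ) * B 2 ^ 2‖ ≤ (s ^ 2 / 4) * (lam - (3 * s - 1) / (3 * s))) ∧
    ((s - 1) / s ≤ lam ∧ lam ≤ (3 * s + 1) / (3 * s) →
      ‖B 3 - (lam : ℂ) * B 2 ^ 2‖ ≤ s / 6) ∧
    (lam ≤ (s - 1) / s →
      ‖B 3 - (lam : ℂ) * B 2 ^ 2‖ ≤ (s ^ 2 / 4) * ((3 * s - 1) / (3 * s) - lam)) := by
  obtain ⟨hw1, hw2⟩ := schwarz_two_coeff ω w hw0 hsum hrep hb
  set m : ℝ := (3*s*(1-lam) - 1)/2 with hm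
  have hid : B 3 - (lam:ℂ) * B 2 ^ 2 = -((s:ℂ)/6) * (w 2 - (m:ℂ) * w 1^2) := by
    rw [hB3, hB2, hd2, hd3, hm]
    push_cast
    ring
  have hx := norm_nonneg (w 1)
  have hnorm_eq : ‖B 3 - (lam:ℂ) * B 2 ^ 2‖ = (s/6) * ‖w 2 - (m:ℂ) * w 1^2‖ := by
    rw [hid, norm_mul, norm_neg]
    congr 1
    rw [show ((s:ℂ)/6) = (((s/6 : ℝ)):ℂ) by push_cast; ring, Complex.norm_real,
      Real.norm_eq_abs, abs_of_pos (by linarith)]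
  have hEb : ‖w 2 - (m:ℂ) * w 1^2‖ ≤ (1 - ‖w 1‖^2) + |m| * ‖w 1‖^2 := by
    calc ‖w 2 - (m:ℂ) * w 1^2‖ ≤ ‖w 2‖ + ‖(m:ℂ) * w 1^2‖ := norm_sub_le _ _
      _ = ‖w 2‖ + |m| * ‖w 1‖^2 := by
          rw [norm_mul, Complex.norm_real, Real.norm_eq_abs, norm_pow]
      _ ≤ (1 - ‖w 1‖^2) + |m| * ‖w 1‖^2 := by nlinarith [abs_nonneg m]
  have hx2 : ‖w 1‖^2 ≤ 1 := by nlinarith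
  have hs3 : (0:ℝ) < 3 * s := by linarith
  have hE0 := norm_nonneg (w 2 - (m:ℂ) * w 1^2)
  refine ⟨?_, ?_, ?_⟩
  · intro hlam
    rw [div_le_iff₀ hs3] at hlam
    have hmle : m ≤ -1 := by rw [hm]; nlinarith
    have hE : ‖w 2 - (m:ℂ) * w 1^2‖ ≤ -m := by
      refine hEb.trans ?_
      rw [abs_of_nonpos (by linarith)]
      nlinarith
    have heq : (s/6) * (-m) = s^2/4 * (lam - (3*s-1)/(3*s)) := by
      rw [hm]; field_simp; ring
    rw [hnorm_eq, ← heq]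
    exact mul_le_mul_of_nonneg_left hE (by linarith)
  · rintro ⟨h1, h2⟩
    rw [div_le_iff₀ hs0] at h1
    rw [le_div_iff₀ hs3] at h2
    have hmabs : |m| ≤ 1 := by
      rw [abs_le, hm]; constructor <;> nlinarith
    have hE : ‖w 2 - (m:ℂ) * w 1^2‖ ≤ 1 := by
      refine hEb.trans ?_
      nlinarith
    rw [hnorm_eq]
    calc (s/6) * ‖w 2 - (m:ℂ) * w 1^2‖ ≤ (s/6) * 1 :=
          mul_le_mul_of_nonneg_left hE (by linarith)
      _ = s/6 := mul_one _
  · intro hlam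
    rw [le_div_iff₀ hs0] at hlam
    have hmge : 1 ≤ m := by rw [hm]; nlinarith
    have hE : ‖w 2 - (m:ℂ) * w 1^2‖ ≤ m := by
      refine hEb.trans ?_
      rw [abs_of_pos (by linarith)]
      nlinarith
    have heq : (s/6) * m = s^2/4 * ((3*s-1)/(3*s) - lam) := by
      rw [hm]; field_simp; ring
    rw [hnorm_eq, ← heq]
    exact mul_le_mul_of_nonneg_left hE (by linarith)
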